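/- For every a ∈ ℝⁿ and every ε > 0, the set {x ∈ ℝⁿ : a and x are ε-close to antipodal} is a convex subset of ℝⁿ; likewise, the set {x ∈ ℝⁿ : a and x are ε-close to podal} is convex. -/

import Mathlib

open scoped RealInnerProductSpace

open scoped Classical in
/-- The lazy random walk matrix of a graph `G` with degree parameter `d`. -/
noncomputable def lazyWalk {n : ℕ} (G : SimpleGraph (Fin n)) (d : ℕ) :
    Matrix (Fin n) (Fin n) ℝ :=
  Matrix.of fun u v =>
    if u = v then 1 - ((G.neighborSet u).ncard : ℝ) / (2 * d)
    else if G.Adj u v then 1 / (2 * d) else 0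

/-- `G` has maximum degree at most `d`. -/
def MaxDegreeLE {n : ℕ} (G : SimpleGraph (Fin n)) (d : ℕ) : Prop :=
  ∀ v, (G.neighborSet v).ncard ≤ d

/-- `p_u^t`: the endpoint distribution of a length-`t` lazy random walk from `u`. -/
noncomputable def pvec {n : ℕ} (G : SimpleGraph (Fin n)) (d t : ℕ) (u : Fin n) :
    EuclideanSpace ℝ (Fin n) :=
  WithLp.toLp 2 fun v => ((lazyWalk G d ^ t).mulVec fun w => if w = u then 1 else 0) v

/-- `q_u^t = p_u^t - (1/n) 𝟙`. -/
noncomputable def qvec {n : ℕ} (G : SimpleGraph (Fin n)) (d t : ℕ) (u : Fin n) :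
    EuclideanSpace ℝ (Fin n) :=
  WithLp.toLp 2 fun v => pvec G d t u v - 1 / n

/-- `q_u^0 = 1_u - (1/n) 𝟙`. -/
noncomputable def qzero {n : ℕ} (u : Fin n) : EuclideanSpace ℝ (Fin n) :=
  WithLp.toLp 2 fun v => (if v = u then 1 else 0) - 1 / n

/-- average of `q_u^0` over `u ∈ S`. -/
noncomputable def qavg {n : ℕ} (S : Finset (Fin n)) : EuclideanSpace ℝ (Fin n) :=
  (S.card : ℝ)⁻¹ • ∑ u ∈ S, qzero u

/-- `a` and `b` are `ε`-close to collinear. -/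
def CloseCollinear {E : Type*} [NormedAddCommGroup E] [NormedSpace ℝ E]
    (ε : ℝ) (a b : E) : Prop :=
  ∃ (ea eb w : E) (s s' : ℝ),
    ‖ea‖ ≤ ε ∧ ‖eb‖ ≤ ε ∧ a + ea = s • w ∧ b + eb = s' • w

/-- `a` and `b` are `ε`-close to antipodal. -/
def CloseAntipodal {E : Type*} [NormedAddCommGroup E] [NormedSpace ℝ E]
    (ε : ℝ) (a b : E) : Prop :=
  ∃ (ea eb w : E) (s s' : ℝ), 0 ≤ s ∧ 0 ≤ s' ∧
    ‖ea‖ ≤ ε ∧ ‖eb‖ ≤ ε ∧ a + ea = s • w ∧ b + eb = -(s' • w)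

/-- `a` and `b` are `ε`-close to podal. -/
def ClosePodal {E : Type*} [NormedAddCommGroup E] [NormedSpace ℝ E]
    (ε : ℝ) (a b : E) : Prop :=
  ∃ (ea eb w : E) (s s' : ℝ), 0 ≤ s ∧ 0 ≤ s' ∧
    ‖ea‖ ≤ ε ∧ ‖eb‖ ≤ ε ∧ a + ea = s • w ∧ b + eb = s' • w

/-- The Gram matrix `A_{u,v}` of two vectors. -/
noncomputable def gram2 {n : ℕ} (a b : EuclideanSpace ℝ (Fin n)) :
    Matrix (Fin 2) (Fin 2) ℝ :=
  !![‖a‖ ^ 2, ⟪a, b⟫; ⟪b, a⟫, ‖b‖ ^ 2]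

/-- Number of edges of `G` between `S` and `C \ S` (for `S ⊆ C`). -/
noncomputable def cutEdgesIn {n : ℕ} (G : SimpleGraph (Fin n)) (C S : Finset (Fin n)) : ℕ :=
  {p : Fin n × Fin n | p.1 ∈ S ∧ p.2 ∈ C ∧ p.2 ∉ S ∧ G.Adj p.1 p.2}.ncard

/-- Number of edges of `G` between `S` and its complement. -/
noncomputable def cutEdges {n : ℕ} (G : SimpleGraph (Fin n)) (S : Finset (Fin n)) : ℕ :=
  cutEdgesIn G Finset.univ S

/-- The cut conductance `φ_G(S) = e(S, V∖S) / (d|S|)`. -/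
noncomputable def cutCond {n : ℕ} (G : SimpleGraph (Fin n)) (d : ℕ) (S : Finset (Fin n)) : ℝ :=
  (cutEdges G S : ℝ) / (d * S.card)

/-- The (inner) conductance of the induced subgraph `G[C]` is at least `φ`. -/
def InnerConductanceGE {n : ℕ} (G : SimpleGraph (Fin n)) (d : ℕ) (C : Finset (Fin n))
    (φ : ℝ) : Prop :=
  ∀ S ⊆ C, S.Nonempty → 2 * S.card ≤ C.card →
    φ ≤ (cutEdgesIn G C S : ℝ) / (d * S.card)

/-- `G` is `(2, φ)`-clusterable. -/
def Clusterable2 {n : ℕ} (G : SimpleGraph (Fin n)) (d : ℕ) (φ : ℝ) : Prop :=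
  InnerConductanceGE G d Finset.univ φ ∨
  ∃ C₁ C₂ : Finset (Fin n), C₁.Nonempty ∧ C₂.Nonempty ∧ Disjoint C₁ C₂ ∧
    C₁ ∪ C₂ = Finset.univ ∧ InnerConductanceGE G d C₁ φ ∧ InnerConductanceGE G d C₂ φ

/-- `G` is `ε`-far from `(2, φ)`-clusterable. -/
def FarFromClusterable2 {n : ℕ} (G : SimpleGraph (Fin n)) (d : ℕ) (ε φ : ℝ) : Prop :=
  ∀ G' : SimpleGraph (Fin n), MaxDegreeLE G' d →
    ((symmDiff G.edgeSet G'.edgeSet).ncard : ℝ) ≤ ε * d * n →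
    ¬ Clusterable2 G' d φ

/-- The span of the eigenvectors of `M` with eigenvalue greater than `c`. -/
noncomputable def heavySpace {n : ℕ} (M : Matrix (Fin n) (Fin n) ℝ) (c : ℝ) :
    Submodule ℝ (EuclideanSpace ℝ (Fin n)) :=
  ⨆ μ : {μ : ℝ // c < μ}, Module.End.eigenspace (Matrix.toEuclideanLin M) (μ : ℝ)

/-- Orthogonal projection onto the span of the eigenvectors of `M` with eigenvalue
greater than `c`. -/
noncomputable def heavyProj {n : ℕ} (M : Matrix (Fin n) (Fin n) ℝ) (c : ℝ)
    (x : EuclideanSpace ℝ (Fin n)) : EuclideanSpace ℝ (Fin n) :=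
  ((heavySpace M c).orthogonalProjection x : EuclideanSpace ℝ (Fin n))

lemma aux_convex {E : Type*} [NormedAddCommGroup E] [NormedSpace ℝ E]
    (a : E) (ε : ℝ) (hε : 0 ≤ ε) (σ : ℝ) (hσ : σ * σ = 1) :
    Convex ℝ {x : E | ∃ (ea eb w : E) (s s' : ℝ), 0 ≤ s ∧ 0 ≤ s' ∧
      ‖ea‖ ≤ ε ∧ ‖eb‖ ≤ ε ∧ a + ea = s • w ∧ x + eb = σ • s' • w} := by
  intro x hx y hy t u ht hu htu
  obtain ⟨ea1, eb1, w1, s1, s1', hs1, hs1', hne1, hnb1, h1, h2⟩ := hx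
  obtain ⟨ea2, eb2, w2, s2, s2', hs2, hs2', hne2, hnb2, h3, h4⟩ := hy
  set z := t • x + u • y with hz
  rcases eq_or_lt_of_le hs1 with hs1z | hs1p
  · refine ⟨ea1, 0, σ • z, 0, 1, le_rfl, zero_le_one, hne1, by simpa, ?_, ?_⟩
    · rw [h1, ← hs1z]; module
    · rw [add_zero, one_smul, smul_smul, hσ, one_smul]
  rcases eq_or_lt_of_le hs2 with hs2z | hs2p
  · refine ⟨ea2, 0, σ • z, 0, 1, le_rfl, zero_le_one, hne2, by simpa, ?_, ?_⟩
    · rw [h3, ← hs2z]; module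
    · rw [add_zero, one_smul, smul_smul, hσ, one_smul]
  -- main case
  obtain ⟨l1, hl1s, hl1⟩ : ∃ l, l * s1 = s1' ∧ 0 ≤ l :=
    ⟨s1' / s1, div_mul_cancel₀ _ (ne_of_gt hs1p), div_nonneg hs1' hs1⟩
  obtain ⟨l2, hl2s, hl2⟩ : ∃ l, l * s2 = s2' ∧ 0 ≤ l :=
    ⟨s2' / s2, div_mul_cancel₀ _ (ne_of_gt hs2p), div_nonneg hs2' hs2⟩
  have hw1 : s1' • w1 = l1 • (a + ea1) := by rw [h1, smul_smul, hl1s]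
  have hw2 : s2' • w2 = l2 • (a + ea2) := by rw [h3, smul_smul, hl2s]
  have hx' : x = σ • l1 • (a + ea1) - eb1 := by rw [← hw1, ← h2]; abel
  have hy' : y = σ • l2 • (a + ea2) - eb2 := by rw [← hw2, ← h4]; abel
  have hm1 : 0 ≤ t * l1 := mul_nonneg ht hl1
  have hm2 : 0 ≤ u * l2 := mul_nonneg hu hl2
  rcases eq_or_lt_of_le (add_nonneg hm1 hm2) with hμz | hμp
  · -- t*l1 + u*l2 = 0, so both vanish and z = -(t•eb1 + u•eb2)
    have ht1 : t * l1 = 0 := by linarith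
    have ht2 : u * l2 = 0 := by linarith
    have e1 : t • (σ • l1 • (a + ea1)) = (0 : E) := by
      rw [smul_smul, smul_smul, show t * σ * l1 = σ * (t * l1) by ring, ht1, mul_zero,
        zero_smul]
    have e2 : u • (σ • l2 • (a + ea2)) = (0 : E) := by
      rw [smul_smul, smul_smul, show u * σ * l2 = σ * (u * l2) by ring, ht2, mul_zero,
        zero_smul]
    have hzz : z = -(t • eb1 + u • eb2) := by
      rw [hz, hx', hy', smul_sub, smul_sub, e1, e2]
      abel
    refine ⟨ea1, -z, w1, s1, 0, hs1, le_rfl, hne1, ?_, h1, by simp⟩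
    rw [hzz, neg_neg]
    calc ‖t • eb1 + u • eb2‖ ≤ ‖t • eb1‖ + ‖u • eb2‖ := norm_add_le _ _
      _ = t * ‖eb1‖ + u * ‖eb2‖ := by
          rw [norm_smul, norm_smul, Real.norm_of_nonneg ht, Real.norm_of_nonneg hu]
      _ ≤ t * ε + u * ε := by gcongr
      _ = ε := by rw [← add_mul, htu, one_mul]
  · -- μ := t*l1 + u*l2 > 0
    have hμn : t * l1 + u * l2 ≠ 0 := ne_of_gt hμp
    refine ⟨(t * l1 + u * l2)⁻¹ • ((t * l1) • ea1 + (u * l2) • ea2),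
      t • eb1 + u • eb2, a + (t * l1 + u * l2)⁻¹ • ((t * l1) • ea1 + (u * l2) • ea2),
      1, t * l1 + u * l2, zero_le_one, hμp.le, ?_, ?_, (one_smul ℝ _).symm, ?_⟩
    · calc ‖(t * l1 + u * l2)⁻¹ • ((t * l1) • ea1 + (u * l2) • ea2)‖
          = (t * l1 + u * l2)⁻¹ * ‖(t * l1) • ea1 + (u * l2) • ea2‖ := by
            rw [norm_smul, Real.norm_of_nonneg (inv_nonneg.2 hμp.le)]
        _ ≤ (t * l1 + u * l2)⁻¹ * (t * l1 * ‖ea1‖ + u * l2 * ‖ea2‖) := by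
            gcongr
            calc ‖(t * l1) • ea1 + (u * l2) • ea2‖
                ≤ ‖(t * l1) • ea1‖ + ‖(u * l2) • ea2‖ := norm_add_le _ _
              _ = t * l1 * ‖ea1‖ + u * l2 * ‖ea2‖ := by
                  rw [norm_smul, norm_smul, Real.norm_of_nonneg hm1, Real.norm_of_nonneg hm2]
        _ ≤ (t * l1 + u * l2)⁻¹ * (t * l1 * ε + u * l2 * ε) := by gcongr
        _ = (t * l1 + u * l2)⁻¹ * (t * l1 + u * l2) * ε := by ring
        _ = ε := by rw [inv_mul_cancel₀ hμn, one_mul]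
    · calc ‖t • eb1 + u • eb2‖ ≤ ‖t • eb1‖ + ‖u • eb2‖ := norm_add_le _ _
        _ = t * ‖eb1‖ + u * ‖eb2‖ := by
            rw [norm_smul, norm_smul, Real.norm_of_nonneg ht, Real.norm_of_nonneg hu]
        _ ≤ t * ε + u * ε := by gcongr
        _ = ε := by rw [← add_mul, htu, one_mul]
    · rw [hz, hx', hy']
      match_scalars <;> first | (field_simp; try ring) | ring


theorem stmt8 {n : ℕ} (a : EuclideanSpace ℝ (Fin n)) (ε : ℝ) (hε : 0 < ε) :
    Convex ℝ {x : EuclideanSpace ℝ (Fin n) | CloseAntipodal ε a x} ∧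
    Convex ℝ {x : EuclideanSpace ℝ (Fin n) | ClosePodal ε a x} := by
  constructor
  · have h := aux_convex a ε hε.le (-1) (by norm_num)
    have hs : {x : EuclideanSpace ℝ (Fin n) | CloseAntipodal ε a x} =
        {x : EuclideanSpace ℝ (Fin n) | ∃ (ea eb w : EuclideanSpace ℝ (Fin n)) (s s' : ℝ),
          0 ≤ s ∧ 0 ≤ s' ∧ ‖ea‖ ≤ ε ∧ ‖eb‖ ≤ ε ∧ a + ea = s • w ∧
          x + eb = (-1 : ℝ) • s' • w} := by
      ext x
      simp only [CloseAntipodal, Set.mem_setOf_eq, neg_one_smul]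
    rw [hs]
    exact h
  · have h := aux_convex a ε hε.le 1 (by norm_num)
    have hs : {x : EuclideanSpace ℝ (Fin n) | ClosePodal ε a x} =
        {x : EuclideanSpace ℝ (Fin n) | ∃ (ea eb w : EuclideanSpace ℝ (Fin n)) (s s' : ℝ),
          0 ≤ s ∧ 0 ≤ s' ∧ ‖ea‖ ≤ ε ∧ ‖eb‖ ≤ ε ∧ a + ea = s • w ∧
          x + eb = (1 : ℝ) • s' • w} := by
      ext x
      simp only [ClosePodal, Set.mem_setOf_eq, one_smul]
    rw [hs]
    exact h
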